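/- Let d ≥ 2, s ∈ (0,1), μ > 0, 2μ + λ > 0, and let P(x,t) be the Poisson kernel for the Lamé–Navier extension problem. Then for every t > 0 the function x ↦ P(x,t) is (entrywise) absolutely integrable on ℝ^d and ∫_{ℝ^d} P(x,t) dx = I, the d×d identity matrix. -/

import Mathlib

open Real MeasureTheory

noncomputable section

/-- The entries of the Poisson kernel `P(x,t)` for the Lamé–Navier extension problem. -/
def lamePoissonEntry (d : ℕ) (s μ lam : ℝ) (x : EuclideanSpace ℝ (Fin d)) (t : ℝ)
    (i j : Fin d) : ℝ :=
  μ ^ s * (Real.Gamma ((d : ℝ) / 2 + s) / (π ^ ((d : ℝ) / 2) * Real.Gamma s)) *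
      (t ^ (2 * s) / (‖x‖ ^ 2 + μ * t ^ 2) ^ (((d : ℝ) + 2 * s) / 2)) *
      (if i = j then 1 else 0) -
    (Real.Gamma ((d : ℝ) / 2 + s) / (2 * π ^ ((d : ℝ) / 2) * Real.Gamma s)) * t ^ (2 * s) *
      (∫ σ in μ..(2 * μ + lam),
        σ ^ (s - 1) / (‖x‖ ^ 2 + σ * t ^ 2) ^ (((d : ℝ) + 2 * s) / 2)) *
      (if i = j then 1 else 0) +
    ((d : ℝ) + 2 * s) *
      (Real.Gamma ((d : ℝ) / 2 + s) / (2 * π ^ ((d : ℝ) / 2) * Real.Gamma s)) * t ^ (2 * s) *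
      (∫ σ in μ..(2 * μ + lam),
        σ ^ (s - 1) / (‖x‖ ^ 2 + σ * t ^ 2) ^ (((d : ℝ) + 2 * s + 2) / 2)) *
      (x i * x j)


namespace LamePoissonAux
open Set

variable {d : ℕ}

local notation "E" => EuclideanSpace ℝ (Fin d)


lemma norm_sq_eq' (x : E) : ‖x‖ ^ 2 = ∑ k, x k ^ 2 := by
  rw [EuclideanSpace.norm_eq, Real.sq_sqrt (Finset.sum_nonneg fun k _ => by positivity)]
  simp [Real.norm_eq_abs, sq_abs]

lemma coord_abs_le_norm (x : E) (i : Fin d) : |x i| ≤ ‖x‖ := by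
  have h1 : x i ^ 2 ≤ ‖x‖ ^ 2 := by
    rw [norm_sq_eq']
    exact Finset.single_le_sum (fun k _ => sq_nonneg (x k)) (Finset.mem_univ i)
  calc |x i| = √(x i ^ 2) := (Real.sqrt_sq_eq_abs _).symm
    _ ≤ √(‖x‖ ^ 2) := Real.sqrt_le_sqrt h1
    _ = ‖x‖ := Real.sqrt_sq (norm_nonneg x)

lemma gauss_integral {u : ℝ} (hu : 0 < u) :
    ∫ x : E, rexp (-u * ‖x‖ ^ 2) = (π / u) ^ ((d:ℝ) / 2) := by
  rw [GaussianFourier.integral_rexp_neg_mul_sq_norm hu]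
  norm_num [finrank_euclideanSpace_fin]

lemma gauss_integrable {u : ℝ} (hu : 0 < u) :
    Integrable fun x : E => rexp (-u * ‖x‖ ^ 2) := by
  have h : Integrable fun v : E =>
      Complex.exp (-(u:ℂ) * (‖v‖:ℂ) ^ 2 + (0:ℂ) * ((inner ℝ (0 : E) v : ℝ) : ℂ)) :=
    GaussianFourier.integrable_cexp_neg_mul_sq_norm_add (by simpa using hu) 0 0
  refine h.re.congr (Filter.Eventually.of_forall fun x => ?_)
  show (Complex.exp _).re = _
  rw [show (-(u:ℂ) * (‖x‖:ℂ) ^ 2 + (0:ℂ) * ((inner ℝ (0 : E) x : ℝ) : ℂ))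
      = ((-u * ‖x‖ ^ 2 : ℝ) : ℂ) by push_cast; ring]
  rw [Complex.exp_ofReal_re]
lemma inner_gauss (a p : ℝ) {u : ℝ} (hu : 0 < u) :
    ∫ x : E, u ^ (p - 1) * rexp (-((‖x‖ ^ 2 + a) * u))
      = π ^ ((d:ℝ)/2) * (u ^ (p - (d:ℝ)/2 - 1) * rexp (-(a * u))) := by
  have h1 : ∀ x : E, u ^ (p-1) * rexp (-((‖x‖^2+a) * u))
      = (u ^ (p-1) * rexp (-(a*u))) * rexp (-u * ‖x‖^2) := by
    intro x
    rw [show -((‖x‖^2+a) * u) = -u * ‖x‖^2 + -(a*u) by ring, Real.exp_add]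
    ring
  simp_rw [h1]
  rw [integral_const_mul, gauss_integral hu,
    show p - (d:ℝ)/2 - 1 = (p-1) + -((d:ℝ)/2) by ring, Real.rpow_add hu,
    Real.rpow_neg hu.le, Real.div_rpow pi_pos.le hu.le, div_eq_mul_inv]
  ring

lemma prodIntegrable {a p : ℝ} (ha : 0 < a) (hp : (d:ℝ)/2 < p) :
    Integrable (Function.uncurry fun (u : ℝ) (x : E) =>
      u ^ (p - 1) * rexp (-((‖x‖ ^ 2 + a) * u))) ((volume.restrict (Ioi 0)).prod volume) := by
  have hmeas : AEStronglyMeasurable (Function.uncurry fun (u : ℝ) (x : E) =>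
      u ^ (p - 1) * rexp (-((‖x‖ ^ 2 + a) * u))) ((volume.restrict (Ioi 0)).prod volume) := by
    rw [← Measure.restrict_univ (μ := (volume : Measure E)), Measure.prod_restrict]
    refine ContinuousOn.aestronglyMeasurable ?_ (measurableSet_Ioi.prod MeasurableSet.univ)
    refine ContinuousOn.mul ?_ (Continuous.continuousOn (by fun_prop))
    exact continuousOn_fst.rpow_const fun q hq => Or.inl (ne_of_gt hq.1)
  rw [integrable_prod_iff hmeas]
  simp only [Function.uncurry_apply_pair]
  constructor
  · filter_upwards [ae_restrict_mem measurableSet_Ioi] with u hu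
    have h1 : ∀ x : E, u ^ (p-1) * rexp (-((‖x‖^2+a) * u))
        = (u ^ (p-1) * rexp (-(a*u))) * rexp (-u * ‖x‖^2) := by
      intro x
      rw [show -((‖x‖^2+a) * u) = -u * ‖x‖^2 + -(a*u) by ring, Real.exp_add]
      ring
    exact ((gauss_integrable hu).const_mul _).congr
      (Filter.Eventually.of_forall fun x => (h1 x).symm)
  · have hkey : ∀ u ∈ Ioi (0:ℝ),
        (∫ x : E, ‖u ^ (p-1) * rexp (-((‖x‖^2+a) * u))‖)
          = π ^ ((d:ℝ)/2) * (u ^ (p - (d:ℝ)/2 - 1) * rexp (-(a*u))) := by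
      intro u hu
      have h2 : ∀ x : E, ‖u ^ (p-1) * rexp (-((‖x‖^2+a)*u))‖
          = u ^ (p-1) * rexp (-((‖x‖^2+a)*u)) := fun x =>
        norm_of_nonneg (mul_nonneg (Real.rpow_nonneg hu.le _) (Real.exp_pos _).le)
      simp_rw [h2]
      exact inner_gauss a p hu
    have hbound : IntegrableOn
        (fun u : ℝ => u ^ (p - (d:ℝ)/2 - 1) * rexp (-(a*u))) (Ioi 0) :=
      (integrableOn_rpow_mul_exp_neg_mul_rpow (s := p - (d:ℝ)/2 - 1) (p := 1)
        (by linarith) zero_lt_one ha).congr_fun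
          (fun x hx => by simp [Real.rpow_one, neg_mul]) measurableSet_Ioi
    refine Integrable.congr (hbound.const_mul (π ^ ((d:ℝ)/2))) ?_
    filter_upwards [ae_restrict_mem measurableSet_Ioi] with u hu
    exact (hkey u hu).symm

lemma intA {a p : ℝ} (ha : 0 < a) (hp : (d:ℝ)/2 < p) :
    Integrable (fun x : E => (‖x‖ ^ 2 + a) ^ (-p)) ∧
      ∫ x : E, (‖x‖ ^ 2 + a) ^ (-p)
        = π ^ ((d:ℝ)/2) * Real.Gamma (p - (d:ℝ)/2) / Real.Gamma p * a ^ ((d:ℝ)/2 - p) := by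
  have hp0 : 0 < p := lt_of_le_of_lt (by positivity) hp
  have hΓp : 0 < Real.Gamma p := Real.Gamma_pos_of_pos hp0
  have hF := prodIntegrable (d := d) ha hp
  have hslice : ∀ x : E, (∫ u in Ioi (0:ℝ), u ^ (p-1) * rexp (-((‖x‖^2+a) * u)))
      = Real.Gamma p * (‖x‖^2+a) ^ (-p) := by
    intro x
    have hc : (0:ℝ) < ‖x‖^2 + a := by positivity
    rw [integral_rpow_mul_exp_neg_mul_Ioi hp0 hc, one_div, Real.inv_rpow hc.le,
      ← Real.rpow_neg hc.le, mul_comm]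
  have hint : Integrable (fun x : E => (‖x‖ ^ 2 + a) ^ (-p)) := by
    have h2 := hF.integral_prod_right
    simp only [Function.uncurry_apply_pair] at h2
    have h1 : Integrable (fun x : E => Real.Gamma p * (‖x‖^2+a) ^ (-p)) :=
      h2.congr (Filter.Eventually.of_forall fun x => hslice x)
    refine (h1.const_mul (Real.Gamma p)⁻¹).congr (Filter.Eventually.of_forall fun x => ?_)
    field_simp
  refine ⟨hint, ?_⟩
  have hswap := integral_integral_swap
    (f := fun (u:ℝ) (x:E) => u ^ (p-1) * rexp (-((‖x‖^2+a)*u))) hF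
  have hL : (∫ u in Ioi (0:ℝ), ∫ x : E, u^(p-1) * rexp (-((‖x‖^2+a)*u)))
      = π ^ ((d:ℝ)/2) * (a ^ ((d:ℝ)/2 - p) * Real.Gamma (p - (d:ℝ)/2)) := by
    rw [setIntegral_congr_fun measurableSet_Ioi (fun u hu => inner_gauss a p hu),
      integral_const_mul, integral_rpow_mul_exp_neg_mul_Ioi (by linarith) ha,
      one_div, Real.inv_rpow ha.le, ← Real.rpow_neg ha.le, neg_sub]
  have hR : (∫ x : E, ∫ u in Ioi (0:ℝ), u^(p-1)*rexp (-((‖x‖^2+a)*u)))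
      = Real.Gamma p * ∫ x : E, (‖x‖^2+a)^(-p) := by
    simp_rw [hslice]
    exact integral_const_mul _ _
  rw [hL, hR] at hswap
  have hval : ∫ x : E, (‖x‖^2+a)^(-p)
      = π ^ ((d:ℝ)/2) * (a ^ ((d:ℝ)/2 - p) * Real.Gamma (p - (d:ℝ)/2)) / Real.Gamma p :=
    (eq_div_iff hΓp.ne').2 (by rw [hswap]; ring)
  rw [hval]; ring
lemma integral_comp_isometry (e : E ≃ₗᵢ[ℝ] E) (f : E → ℝ) :
    ∫ x : E, f (e x) = ∫ x : E, f x :=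
  e.measurePreserving.integral_comp e.toHomeomorph.measurableEmbedding f

lemma coord_continuous (i : Fin d) : Continuous fun x : E => x i :=
  (continuous_apply i).comp (PiLp.continuous_ofLp (p := 2) (β := fun _ : Fin d => ℝ))

lemma intB_integrable {a p : ℝ} (ha : 0 < a) (hp : (d:ℝ)/2 + 1 < p) (i j : Fin d) :
    Integrable fun x : E => x i * x j * (‖x‖ ^ 2 + a) ^ (-p) := by
  have h1 : Integrable (fun x : E => (‖x‖ ^ 2 + a) ^ (-(p-1))) :=
    (intA ha (show (d:ℝ)/2 < p - 1 by linarith)).1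
  refine h1.mono' ?_ (Filter.Eventually.of_forall fun x => ?_)
  · exact (((coord_continuous i).mul (coord_continuous j)).mul
      (((continuous_norm.pow 2).add continuous_const).rpow_const
        fun x => Or.inl (ne_of_gt (add_pos_of_nonneg_of_pos (sq_nonneg _) ha)))).aestronglyMeasurable
  · have hc : (0:ℝ) < ‖x‖ ^ 2 + a := by positivity
    have hxx : |x i * x j| ≤ ‖x‖ ^ 2 + a := by
      rw [abs_mul]
      calc |x i| * |x j| ≤ ‖x‖ * ‖x‖ :=
            mul_le_mul (coord_abs_le_norm x i) (coord_abs_le_norm x j)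
              (abs_nonneg _) (norm_nonneg _)
        _ = ‖x‖ ^ 2 := (sq ‖x‖).symm
        _ ≤ ‖x‖ ^ 2 + a := by linarith
    calc ‖x i * x j * (‖x‖ ^ 2 + a) ^ (-p)‖
        = |x i * x j| * (‖x‖ ^ 2 + a) ^ (-p) := by
          rw [norm_mul, Real.norm_eq_abs, Real.norm_eq_abs,
            abs_of_nonneg (Real.rpow_nonneg hc.le _)]
      _ ≤ (‖x‖ ^ 2 + a) * (‖x‖ ^ 2 + a) ^ (-p) :=
          mul_le_mul_of_nonneg_right hxx (Real.rpow_nonneg hc.le _)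
      _ = (‖x‖ ^ 2 + a) ^ (-(p-1)) := by
          rw [show -(p-1) = 1 + -p by ring, Real.rpow_add hc, Real.rpow_one]

lemma offdiag_zero {a p : ℝ} {i j : Fin d} (hij : i ≠ j) :
    ∫ x : E, x i * x j * (‖x‖ ^ 2 + a) ^ (-p) = 0 := by
  classical
  set e : E ≃ₗᵢ[ℝ] E := LinearIsometryEquiv.piLpCongrRight 2
    (fun k : Fin d => if k = i then LinearIsometryEquiv.neg ℝ
      else LinearIsometryEquiv.refl ℝ ℝ) with he
  have happ : ∀ (x : E) (k : Fin d), e x k = if k = i then -x k else x k := by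
    intro x k
    simp only [he, LinearIsometryEquiv.piLpCongrRight_apply, PiLp.toLp_apply]
    split <;> simp
  have key : ∫ x : E, x i * x j * (‖x‖ ^ 2 + a) ^ (-p)
      = ∫ x : E, -(x i * x j * (‖x‖ ^ 2 + a) ^ (-p)) := by
    conv_lhs => rw [← integral_comp_isometry e
      (fun y : E => y i * y j * (‖y‖ ^ 2 + a) ^ (-p))]
    refine integral_congr_ae (Filter.Eventually.of_forall fun x => ?_)
    show (e x) i * (e x) j * (‖e x‖ ^ 2 + a) ^ (-p) = _
    rw [happ, happ, if_pos rfl, if_neg (fun h => hij h.symm), e.norm_map]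
    ring
  rw [integral_neg] at key
  linarith

lemma coord_sq_swap (a p : ℝ) (k l : Fin d) :
    ∫ x : E, x k ^ 2 * (‖x‖ ^ 2 + a) ^ (-p)
      = ∫ x : E, x l ^ 2 * (‖x‖ ^ 2 + a) ^ (-p) := by
  classical
  set e : E ≃ₗᵢ[ℝ] E := LinearIsometryEquiv.piLpCongrLeft 2 ℝ ℝ (Equiv.swap k l) with he
  have happ : ∀ (x : E) (m : Fin d), e x m = x (Equiv.swap k l m) := by
    intro x m
    simp [he, LinearIsometryEquiv.piLpCongrLeft_apply, Equiv.piCongrLeft']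
  conv_lhs => rw [← integral_comp_isometry e
    (fun y : E => y k ^ 2 * (‖y‖ ^ 2 + a) ^ (-p))]
  refine integral_congr_ae (Filter.Eventually.of_forall fun x => ?_)
  have hpt : (e x) k ^ 2 * (‖e x‖ ^ 2 + a) ^ (-p) = x l ^ 2 * (‖x‖ ^ 2 + a) ^ (-p) := by
    rw [happ, Equiv.swap_apply_left, e.norm_map]
  exact hpt

lemma intB_diag {a p : ℝ} (ha : 0 < a) (hp : (d:ℝ)/2 + 1 < p) (hd : 0 < d) (i : Fin d) :
    ∫ x : E, x i * x i * (‖x‖ ^ 2 + a) ^ (-p)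
      = π ^ ((d:ℝ)/2) * Real.Gamma (p - (d:ℝ)/2 - 1) / (2 * Real.Gamma p)
        * a ^ ((d:ℝ)/2 + 1 - p) := by
  have hd2 : (0:ℝ) ≤ (d:ℝ)/2 := by positivity
  have hp1 : (0:ℝ) < p - 1 := by linarith
  have A := intA (d := d) ha (show (d:ℝ)/2 < p by linarith)
  have A' := intA (d := d) ha (show (d:ℝ)/2 < p - 1 by linarith)
  have hint_k : ∀ k : Fin d, Integrable fun x : E => x k ^ 2 * (‖x‖ ^ 2 + a) ^ (-p) := by
    intro k
    exact (intB_integrable ha hp k k).congr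
      (Filter.Eventually.of_forall fun x => by
        have hpt : x k * x k * (‖x‖ ^ 2 + a) ^ (-p) = x k ^ 2 * (‖x‖ ^ 2 + a) ^ (-p) := by
          ring
        exact hpt)
  have hsum : ∑ k : Fin d, ∫ x : E, x k ^ 2 * (‖x‖ ^ 2 + a) ^ (-p)
      = ∫ x : E, ‖x‖ ^ 2 * (‖x‖ ^ 2 + a) ^ (-p) := by
    rw [← integral_finset_sum _ (fun k _ => hint_k k)]
    refine integral_congr_ae (Filter.Eventually.of_forall fun x => ?_)
    have hpt : (∑ k : Fin d, x k ^ 2 * (‖x‖ ^ 2 + a) ^ (-p))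
        = ‖x‖ ^ 2 * (‖x‖ ^ 2 + a) ^ (-p) := by
      rw [← Finset.sum_mul, ← norm_sq_eq']
    exact hpt
  have hd_sum : ∑ k : Fin d, ∫ x : E, x k ^ 2 * (‖x‖ ^ 2 + a) ^ (-p)
      = (d:ℝ) * ∫ x : E, x i ^ 2 * (‖x‖ ^ 2 + a) ^ (-p) := by
    rw [Finset.sum_congr rfl (fun k _ => coord_sq_swap a p k i), Finset.sum_const,
      Finset.card_univ, Fintype.card_fin, nsmul_eq_mul]
  have hnorm_int : ∫ x : E, ‖x‖ ^ 2 * (‖x‖ ^ 2 + a) ^ (-p)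
      = (∫ x : E, (‖x‖ ^ 2 + a) ^ (-(p-1))) - a * ∫ x : E, (‖x‖ ^ 2 + a) ^ (-p) := by
    rw [← integral_const_mul a, ← integral_sub A'.1 (A.1.const_mul a)]
    refine integral_congr_ae (Filter.Eventually.of_forall fun x => ?_)
    have hc : (0:ℝ) < ‖x‖ ^ 2 + a := by positivity
    have hpt : ‖x‖ ^ 2 * (‖x‖ ^ 2 + a) ^ (-p)
        = (‖x‖ ^ 2 + a) ^ (-(p-1)) - a * (‖x‖ ^ 2 + a) ^ (-p) := by
      rw [show -(p-1) = 1 + -p by ring, Real.rpow_add hc, Real.rpow_one]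
      ring
    exact hpt
  have hGp1 : (0:ℝ) < Real.Gamma (p - 1) := Real.Gamma_pos_of_pos hp1
  have hG : (0:ℝ) < Real.Gamma (p - (d:ℝ)/2 - 1) :=
    Real.Gamma_pos_of_pos (by linarith)
  have h1 : Real.Gamma p = (p - 1) * Real.Gamma (p - 1) := by
    have := Real.Gamma_add_one (show p - 1 ≠ 0 by linarith)
    rwa [sub_add_cancel] at this
  have h2 : Real.Gamma (p - (d:ℝ)/2) = (p - (d:ℝ)/2 - 1) * Real.Gamma (p - (d:ℝ)/2 - 1) := by
    have := Real.Gamma_add_one (show p - (d:ℝ)/2 - 1 ≠ 0 by linarith)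
    rwa [sub_add_cancel] at this
  have hX : (d:ℝ) * ∫ x : E, x i ^ 2 * (‖x‖ ^ 2 + a) ^ (-p)
      = π ^ ((d:ℝ)/2) * Real.Gamma (p - 1 - (d:ℝ)/2) / Real.Gamma (p-1) * a ^ ((d:ℝ)/2 - (p-1))
        - a * (π ^ ((d:ℝ)/2) * Real.Gamma (p - (d:ℝ)/2) / Real.Gamma p * a ^ ((d:ℝ)/2 - p)) := by
    rw [← hd_sum, hsum, hnorm_int, A'.2, A.2]
  have hXval : (d:ℝ) * ∫ x : E, x i ^ 2 * (‖x‖ ^ 2 + a) ^ (-p)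
      = (d:ℝ) * (π ^ ((d:ℝ)/2) * Real.Gamma (p - (d:ℝ)/2 - 1) / (2 * Real.Gamma p)
        * a ^ ((d:ℝ)/2 + 1 - p)) := by
    rw [hX, show p - 1 - (d:ℝ)/2 = p - (d:ℝ)/2 - 1 by ring,
      show (d:ℝ)/2 - (p-1) = 1 + ((d:ℝ)/2 - p) by ring,
      show (d:ℝ)/2 + 1 - p = 1 + ((d:ℝ)/2 - p) by ring,
      Real.rpow_add ha, Real.rpow_one, h1, h2]
    field_simp
    ring
  have hdne : (d:ℝ) ≠ 0 := Nat.cast_ne_zero.mpr hd.ne'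
  have := mul_left_cancel₀ hdne hXval
  rw [← this]
  refine integral_congr_ae (Filter.Eventually.of_forall fun x => ?_)
  have hpt : x i * x i * (‖x‖ ^ 2 + a) ^ (-p) = x i ^ 2 * (‖x‖ ^ 2 + a) ^ (-p) := by
    ring
  exact hpt
lemma fub1 {s t α β p : ℝ} (hα : 0 < α) (ht : 0 < t) (hp : (d:ℝ)/2 < p) :
    Integrable (fun x : E => ∫ σ in Ioc α β, σ ^ (s - 1) * (‖x‖ ^ 2 + σ * t ^ 2) ^ (-p)) ∧
    (∫ x : E, ∫ σ in Ioc α β, σ ^ (s - 1) * (‖x‖ ^ 2 + σ * t ^ 2) ^ (-p))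
      = ∫ σ in Ioc α β, σ ^ (s - 1) *
          (π ^ ((d:ℝ)/2) * Real.Gamma (p - (d:ℝ)/2) / Real.Gamma p
            * (σ * t ^ 2) ^ ((d:ℝ)/2 - p)) := by
  have hGm : AEStronglyMeasurable (Function.uncurry fun (σ:ℝ) (x:E) =>
      σ ^ (s-1) * (‖x‖ ^ 2 + σ * t ^ 2) ^ (-p))
      ((volume.restrict (Ioc α β)).prod volume) := by
    rw [← Measure.restrict_univ (μ := (volume : Measure E)), Measure.prod_restrict]
    refine ContinuousOn.aestronglyMeasurable ?_ (measurableSet_Ioc.prod MeasurableSet.univ)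
    refine ContinuousOn.mul
      (continuousOn_fst.rpow_const fun q hq => Or.inl (ne_of_gt (hα.trans hq.1.1))) ?_
    refine ContinuousOn.rpow_const (Continuous.continuousOn (by fun_prop))
      fun q hq => Or.inl ?_
    have h0 : (0:ℝ) < q.1 := hα.trans hq.1.1
    exact (add_pos_of_nonneg_of_pos (by positivity) (mul_pos h0 (by positivity))).ne'
  have hG : Integrable (Function.uncurry fun (σ:ℝ) (x:E) =>
      σ ^ (s-1) * (‖x‖ ^ 2 + σ * t ^ 2) ^ (-p))
      ((volume.restrict (Ioc α β)).prod volume) := by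
    rw [integrable_prod_iff hGm]
    simp only [Function.uncurry_apply_pair]
    constructor
    · filter_upwards [ae_restrict_mem measurableSet_Ioc] with σ hσ
      have hσ0 : (0:ℝ) < σ := hα.trans hσ.1
      exact (intA (mul_pos hσ0 (by positivity)) hp).1.const_mul _
    · have hbound : IntegrableOn (fun σ : ℝ => σ ^ (s-1) *
          (π ^ ((d:ℝ)/2) * Real.Gamma (p - (d:ℝ)/2) / Real.Gamma p
            * (σ * t ^ 2) ^ ((d:ℝ)/2 - p))) (Ioc α β) := by
        refine (ContinuousOn.integrableOn_Icc ?_).mono_set Ioc_subset_Icc_self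
        refine ContinuousOn.mul
          (continuousOn_id.rpow_const fun σ hσ =>
            Or.inl (ne_of_gt (lt_of_lt_of_le hα hσ.1))) ?_
        refine continuousOn_const.mul (ContinuousOn.rpow_const
          ((continuous_id.mul continuous_const).continuousOn)
          fun σ hσ => Or.inl (ne_of_gt (mul_pos (lt_of_lt_of_le hα hσ.1) (by positivity))))
      refine Integrable.congr hbound ?_
      filter_upwards [ae_restrict_mem measurableSet_Ioc] with σ hσ
      have hσ0 : (0:ℝ) < σ := hα.trans hσ.1
      have ha : (0:ℝ) < σ * t ^ 2 := mul_pos hσ0 (by positivity)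
      have h2 : ∀ x : E, ‖σ ^ (s-1) * (‖x‖ ^ 2 + σ * t ^ 2) ^ (-p)‖
          = σ ^ (s-1) * (‖x‖ ^ 2 + σ * t ^ 2) ^ (-p) := fun x =>
        norm_of_nonneg (mul_nonneg (Real.rpow_nonneg hσ0.le _)
          (Real.rpow_nonneg (by positivity) _))
      simp_rw [h2]
      rw [integral_const_mul, (intA ha hp).2]
  constructor
  · have h2 := hG.integral_prod_right
    simpa only [Function.uncurry_apply_pair] using h2
  · have hswap := integral_integral_swap
      (f := fun (σ:ℝ) (x:E) => σ ^ (s-1) * (‖x‖ ^ 2 + σ * t ^ 2) ^ (-p)) hG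
    rw [← hswap]
    refine setIntegral_congr_fun measurableSet_Ioc fun σ hσ => ?_
    have hσ0 : (0:ℝ) < σ := hα.trans hσ.1
    have ha : (0:ℝ) < σ * t ^ 2 := mul_pos hσ0 (by positivity)
    rw [integral_const_mul, (intA ha hp).2]

lemma fub2 {s t α β p : ℝ} (hα : 0 < α) (ht : 0 < t) (hp : (d:ℝ)/2 + 1 < p) (i j : Fin d) :
    Integrable (fun x : E => x i * x j *
      ∫ σ in Ioc α β, σ ^ (s - 1) * (‖x‖ ^ 2 + σ * t ^ 2) ^ (-p)) ∧
    (∫ x : E, x i * x j * ∫ σ in Ioc α β, σ ^ (s - 1) * (‖x‖ ^ 2 + σ * t ^ 2) ^ (-p))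
      = ∫ σ in Ioc α β, σ ^ (s - 1) *
          ∫ x : E, x i * x j * (‖x‖ ^ 2 + σ * t ^ 2) ^ (-p) := by
  have hp' : (d:ℝ)/2 < p - 1 := by linarith
  have hGm : AEStronglyMeasurable (Function.uncurry fun (σ:ℝ) (x:E) =>
      x i * x j * (σ ^ (s-1) * (‖x‖ ^ 2 + σ * t ^ 2) ^ (-p)))
      ((volume.restrict (Ioc α β)).prod volume) := by
    rw [← Measure.restrict_univ (μ := (volume : Measure E)), Measure.prod_restrict]
    refine ContinuousOn.aestronglyMeasurable ?_ (measurableSet_Ioc.prod MeasurableSet.univ)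
    refine ContinuousOn.mul (Continuous.continuousOn
      (((coord_continuous i).comp continuous_snd).mul
        ((coord_continuous j).comp continuous_snd))) ?_
    refine ContinuousOn.mul
      (continuousOn_fst.rpow_const fun q hq => Or.inl (ne_of_gt (hα.trans hq.1.1))) ?_
    refine ContinuousOn.rpow_const (Continuous.continuousOn (by fun_prop))
      fun q hq => Or.inl ?_
    have h0 : (0:ℝ) < q.1 := hα.trans hq.1.1
    exact (add_pos_of_nonneg_of_pos (by positivity) (mul_pos h0 (by positivity))).ne'
  have hslice : ∀ σ : ℝ, σ ∈ Ioc α β → Integrable (fun x : E =>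
      x i * x j * (σ ^ (s-1) * (‖x‖ ^ 2 + σ * t ^ 2) ^ (-p))) := by
    intro σ hσ
    have hσ0 : (0:ℝ) < σ := hα.trans hσ.1
    have ha : (0:ℝ) < σ * t ^ 2 := mul_pos hσ0 (by positivity)
    refine ((intB_integrable ha hp i j).const_mul (σ ^ (s-1))).congr
      (Filter.Eventually.of_forall fun x => ?_)
    have hpt : σ ^ (s-1) * (x i * x j * (‖x‖ ^ 2 + σ * t ^ 2) ^ (-p))
        = x i * x j * (σ ^ (s-1) * (‖x‖ ^ 2 + σ * t ^ 2) ^ (-p)) := by ring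
    exact hpt
  have hG : Integrable (Function.uncurry fun (σ:ℝ) (x:E) =>
      x i * x j * (σ ^ (s-1) * (‖x‖ ^ 2 + σ * t ^ 2) ^ (-p)))
      ((volume.restrict (Ioc α β)).prod volume) := by
    rw [integrable_prod_iff hGm]
    simp only [Function.uncurry_apply_pair]
    constructor
    · filter_upwards [ae_restrict_mem measurableSet_Ioc] with σ hσ
      exact hslice σ hσ
    · have hbound : IntegrableOn (fun σ : ℝ => σ ^ (s-1) *
          (π ^ ((d:ℝ)/2) * Real.Gamma (p - 1 - (d:ℝ)/2) / Real.Gamma (p-1)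
            * (σ * t ^ 2) ^ ((d:ℝ)/2 - (p-1)))) (Ioc α β) := by
        refine (ContinuousOn.integrableOn_Icc ?_).mono_set Ioc_subset_Icc_self
        refine ContinuousOn.mul
          (continuousOn_id.rpow_const fun σ hσ =>
            Or.inl (ne_of_gt (lt_of_lt_of_le hα hσ.1))) ?_
        refine continuousOn_const.mul (ContinuousOn.rpow_const
          ((continuous_id.mul continuous_const).continuousOn)
          fun σ hσ => Or.inl (ne_of_gt (mul_pos (lt_of_lt_of_le hα hσ.1) (by positivity))))
      refine Integrable.mono' hbound (hGm.norm.integral_prod_right') ?_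
      filter_upwards [ae_restrict_mem measurableSet_Ioc] with σ hσ
      have hσ0 : (0:ℝ) < σ := hα.trans hσ.1
      have ha : (0:ℝ) < σ * t ^ 2 := mul_pos hσ0 (by positivity)
      have hnn : (0:ℝ) ≤ ∫ x : E, ‖x i * x j * (σ ^ (s-1) * (‖x‖ ^ 2 + σ * t ^ 2) ^ (-p))‖ :=
        integral_nonneg fun x => norm_nonneg _
      rw [Real.norm_eq_abs, abs_of_nonneg hnn]
      have hle : ∀ x : E, ‖x i * x j * (σ ^ (s-1) * (‖x‖ ^ 2 + σ * t ^ 2) ^ (-p))‖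
          ≤ σ ^ (s-1) * (‖x‖ ^ 2 + σ * t ^ 2) ^ (-(p-1)) := by
        intro x
        have hc : (0:ℝ) < ‖x‖ ^ 2 + σ * t ^ 2 := by positivity
        have hxx : |x i * x j| ≤ ‖x‖ ^ 2 + σ * t ^ 2 := by
          rw [abs_mul]
          calc |x i| * |x j| ≤ ‖x‖ * ‖x‖ :=
                mul_le_mul (coord_abs_le_norm x i) (coord_abs_le_norm x j)
                  (abs_nonneg _) (norm_nonneg _)
            _ = ‖x‖ ^ 2 := (sq ‖x‖).symm
            _ ≤ ‖x‖ ^ 2 + σ * t ^ 2 := by nlinarith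
        calc ‖x i * x j * (σ ^ (s-1) * (‖x‖ ^ 2 + σ * t ^ 2) ^ (-p))‖
            = |x i * x j| * (σ ^ (s-1) * (‖x‖ ^ 2 + σ * t ^ 2) ^ (-p)) := by
              rw [norm_mul, Real.norm_eq_abs, Real.norm_eq_abs,
                abs_of_nonneg (mul_nonneg (Real.rpow_nonneg hσ0.le _)
                  (Real.rpow_nonneg hc.le _))]
          _ ≤ (‖x‖ ^ 2 + σ * t ^ 2) * (σ ^ (s-1) * (‖x‖ ^ 2 + σ * t ^ 2) ^ (-p)) :=
              mul_le_mul_of_nonneg_right hxx (mul_nonneg (Real.rpow_nonneg hσ0.le _)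
                (Real.rpow_nonneg hc.le _))
          _ = σ ^ (s-1) * (‖x‖ ^ 2 + σ * t ^ 2) ^ (-(p-1)) := by
              rw [show -(p-1) = 1 + -p by ring, Real.rpow_add hc, Real.rpow_one]
              ring
      calc (∫ x : E, ‖x i * x j * (σ ^ (s-1) * (‖x‖ ^ 2 + σ * t ^ 2) ^ (-p))‖)
          ≤ ∫ x : E, σ ^ (s-1) * (‖x‖ ^ 2 + σ * t ^ 2) ^ (-(p-1)) :=
            integral_mono (hslice σ hσ).norm
              ((intA ha hp').1.const_mul _) hle
        _ = σ ^ (s-1) * (π ^ ((d:ℝ)/2) * Real.Gamma (p - 1 - (d:ℝ)/2) / Real.Gamma (p-1)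
              * (σ * t ^ 2) ^ ((d:ℝ)/2 - (p-1))) := by
            rw [integral_const_mul, (intA ha hp').2]
  constructor
  · have h2 := hG.integral_prod_right
    simp only [Function.uncurry_apply_pair] at h2
    refine h2.congr (Filter.Eventually.of_forall fun x => ?_)
    have hpt : (∫ σ in Ioc α β, x i * x j * (σ ^ (s-1) * (‖x‖ ^ 2 + σ * t ^ 2) ^ (-p)))
        = x i * x j * ∫ σ in Ioc α β, σ ^ (s-1) * (‖x‖ ^ 2 + σ * t ^ 2) ^ (-p) :=
      integral_const_mul _ _
    exact hpt
  · have hswap := integral_integral_swap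
      (f := fun (σ:ℝ) (x:E) => x i * x j * (σ ^ (s-1) * (‖x‖ ^ 2 + σ * t ^ 2) ^ (-p))) hG
    have hlhs : (∫ x : E, x i * x j *
        ∫ σ in Ioc α β, σ ^ (s - 1) * (‖x‖ ^ 2 + σ * t ^ 2) ^ (-p))
        = ∫ x : E, ∫ σ in Ioc α β, x i * x j *
            (σ ^ (s - 1) * (‖x‖ ^ 2 + σ * t ^ 2) ^ (-p)) := by
      refine integral_congr_ae (Filter.Eventually.of_forall fun x => ?_)
      have hpt : x i * x j * (∫ σ in Ioc α β, σ ^ (s-1) * (‖x‖ ^ 2 + σ * t ^ 2) ^ (-p))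
          = ∫ σ in Ioc α β, x i * x j * (σ ^ (s-1) * (‖x‖ ^ 2 + σ * t ^ 2) ^ (-p)) := by
        rw [← integral_const_mul]
      exact hpt
    rw [hlhs, ← hswap]
    refine setIntegral_congr_fun measurableSet_Ioc fun σ hσ => ?_
    have hpt2 : (∫ y : E, y i * y j * (σ ^ (s-1) * (‖y‖ ^ 2 + σ * t ^ 2) ^ (-p)))
        = σ ^ (s-1) * ∫ y : E, y i * y j * (‖y‖ ^ 2 + σ * t ^ 2) ^ (-p) := by
      rw [← integral_const_mul]
      exact integral_congr_ae (Filter.Eventually.of_forall fun y =>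
        (show y i * y j * (σ ^ (s-1) * (‖y‖ ^ 2 + σ * t ^ 2) ^ (-p))
          = σ ^ (s-1) * (y i * y j * (‖y‖ ^ 2 + σ * t ^ 2) ^ (-p)) by ring))
    exact hpt2

end LamePoissonAux

open Set LamePoissonAux in
/-- For each `t > 0` the Lamé–Navier Poisson kernel is absolutely integrable in `x`
(entrywise) and its total integral is the identity matrix. -/
theorem lamePoisson_integral_eq_id (d : ℕ) (hd : 2 ≤ d) (s : ℝ)
    (hs : s ∈ Set.Ioo (0 : ℝ) 1) (μ lam : ℝ) (hμ : 0 < μ) (hlam : 0 < 2 * μ + lam)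
    (t : ℝ) (ht : 0 < t) :
    ∀ i j : Fin d,
      (Integrable fun x : EuclideanSpace ℝ (Fin d) => lamePoissonEntry d s μ lam x t i j) ∧
      (∫ x : EuclideanSpace ℝ (Fin d), lamePoissonEntry d s μ lam x t i j) =
        (if i = j then 1 else 0) := by
  intro i j
  obtain ⟨hs0, hs1⟩ := hs
  have hd0 : 0 < d := lt_of_lt_of_le two_pos hd
  have hp₁ : (d:ℝ)/2 < ((d:ℝ) + 2*s)/2 := by linarith
  have hp₂ : (d:ℝ)/2 + 1 < ((d:ℝ) + 2*s + 2)/2 := by linarith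
  obtain ⟨α, β, ε, hα, hJ⟩ :
      ∃ (α β ε : ℝ), 0 < α ∧ ∀ (p : ℝ) (x : EuclideanSpace ℝ (Fin d)),
        (∫ σ in μ..(2*μ + lam), σ ^ (s - 1) / (‖x‖ ^ 2 + σ * t ^ 2) ^ p)
          = ε * ∫ σ in Ioc α β, σ ^ (s - 1) * (‖x‖ ^ 2 + σ * t ^ 2) ^ (-p) := by
    rcases le_total μ (2*μ + lam) with h | h
    · refine ⟨μ, 2*μ + lam, 1, hμ, fun p x => ?_⟩
      rw [intervalIntegral.integral_of_le h, one_mul]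
      refine setIntegral_congr_fun measurableSet_Ioc fun σ hσ => ?_
      have hc : (0:ℝ) ≤ ‖x‖ ^ 2 + σ * t ^ 2 :=
        add_nonneg (by positivity) (mul_nonneg (hμ.trans hσ.1).le (by positivity))
      rw [Real.rpow_neg hc, div_eq_mul_inv]
    · refine ⟨2*μ + lam, μ, -1, hlam, fun p x => ?_⟩
      rw [intervalIntegral.integral_symm, intervalIntegral.integral_of_le h, neg_one_mul]
      congr 1
      refine setIntegral_congr_fun measurableSet_Ioc fun σ hσ => ?_
      have hc : (0:ℝ) ≤ ‖x‖ ^ 2 + σ * t ^ 2 :=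
        add_nonneg (by positivity) (mul_nonneg (hlam.trans hσ.1).le (by positivity))
      rw [Real.rpow_neg hc, div_eq_mul_inv]
  by_cases hij : i = j
  · subst hij
    have Gds_def : True := trivial
    have hA : (0:ℝ) < μ * t ^ 2 := by positivity
    have hEntry : (fun x : EuclideanSpace ℝ (Fin d) => lamePoissonEntry d s μ lam x t i i)
        = fun x => (μ ^ s * (Real.Gamma ((d:ℝ)/2 + s) / (π ^ ((d:ℝ)/2) * Real.Gamma s)) * t ^ (2*s)) *
              (‖x‖ ^ 2 + μ * t ^ 2) ^ (-(((d:ℝ) + 2*s)/2))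
            - (Real.Gamma ((d:ℝ)/2 + s) / (2 * π ^ ((d:ℝ)/2) * Real.Gamma s) * t ^ (2*s) * ε) *
              (∫ σ in Ioc α β, σ ^ (s - 1) * (‖x‖ ^ 2 + σ * t ^ 2) ^ (-(((d:ℝ) + 2*s)/2)))
            + (((d:ℝ) + 2*s) * (Real.Gamma ((d:ℝ)/2 + s) / (2 * π ^ ((d:ℝ)/2) * Real.Gamma s)) * t ^ (2*s) * ε) *
              (x i * x i *
                ∫ σ in Ioc α β, σ ^ (s - 1) * (‖x‖ ^ 2 + σ * t ^ 2) ^ (-(((d:ℝ) + 2*s + 2)/2))) := by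
      funext x
      have hc : (0:ℝ) ≤ ‖x‖ ^ 2 + μ * t ^ 2 := by positivity
      rw [lamePoissonEntry, if_pos rfl, hJ (((d:ℝ) + 2*s)/2) x, hJ (((d:ℝ) + 2*s + 2)/2) x,
        div_eq_mul_inv (t ^ (2*s)), ← Real.rpow_neg hc]
      ring
    have hf1 : Integrable (fun x : EuclideanSpace ℝ (Fin d) =>
        (μ ^ s * (Real.Gamma ((d:ℝ)/2 + s) / (π ^ ((d:ℝ)/2) * Real.Gamma s)) * t ^ (2*s)) *
          (‖x‖ ^ 2 + μ * t ^ 2) ^ (-(((d:ℝ) + 2*s)/2))) :=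
      (intA hA hp₁).1.const_mul _
    have hf2 : Integrable (fun x : EuclideanSpace ℝ (Fin d) =>
        (Real.Gamma ((d:ℝ)/2 + s) / (2 * π ^ ((d:ℝ)/2) * Real.Gamma s) * t ^ (2*s) * ε) *
          (∫ σ in Ioc α β, σ ^ (s - 1) * (‖x‖ ^ 2 + σ * t ^ 2) ^ (-(((d:ℝ) + 2*s)/2)))) :=
      (fub1 (s := s) (β := β) hα ht hp₁).1.const_mul _
    have hf3 : Integrable (fun x : EuclideanSpace ℝ (Fin d) =>
        (((d:ℝ) + 2*s) * (Real.Gamma ((d:ℝ)/2 + s) / (2 * π ^ ((d:ℝ)/2) * Real.Gamma s)) * t ^ (2*s) * ε) *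
          (x i * x i *
            ∫ σ in Ioc α β, σ ^ (s - 1) * (‖x‖ ^ 2 + σ * t ^ 2) ^ (-(((d:ℝ) + 2*s + 2)/2)))) :=
      ((fub2 (s := s) (β := β) hα ht hp₂ i i).1).const_mul _
    have hsub : Integrable (fun x : EuclideanSpace ℝ (Fin d) =>
        (μ ^ s * (Real.Gamma ((d:ℝ)/2 + s) / (π ^ ((d:ℝ)/2) * Real.Gamma s)) * t ^ (2*s)) *
          (‖x‖ ^ 2 + μ * t ^ 2) ^ (-(((d:ℝ) + 2*s)/2))
        - (Real.Gamma ((d:ℝ)/2 + s) / (2 * π ^ ((d:ℝ)/2) * Real.Gamma s) * t ^ (2*s) * ε) *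
          (∫ σ in Ioc α β, σ ^ (s - 1) * (‖x‖ ^ 2 + σ * t ^ 2) ^ (-(((d:ℝ) + 2*s)/2)))) :=
      hf1.sub hf2
    constructor
    · rw [hEntry]
      exact hsub.add hf3
    · rw [hEntry, if_pos rfl]
      rw [integral_add hsub hf3, integral_sub hf1 hf2,
        integral_const_mul, integral_const_mul, integral_const_mul,
        (intA hA hp₁).2, (fub1 (s := s) (β := β) hα ht hp₁).2,
        (fub2 (s := s) (β := β) hα ht hp₂ i i).2]
      have hV3 : (∫ σ in Ioc α β, σ ^ (s-1) *
            ∫ x : EuclideanSpace ℝ (Fin d), x i * x i *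
              (‖x‖ ^ 2 + σ * t ^ 2) ^ (-(((d:ℝ) + 2*s + 2)/2)))
          = ∫ σ in Ioc α β, σ ^ (s-1) *
              (π ^ ((d:ℝ)/2) * Real.Gamma (((d:ℝ) + 2*s + 2)/2 - (d:ℝ)/2 - 1) /
                (2 * Real.Gamma (((d:ℝ) + 2*s + 2)/2))
                * (σ * t ^ 2) ^ ((d:ℝ)/2 + 1 - ((d:ℝ) + 2*s + 2)/2)) := by
        refine setIntegral_congr_fun measurableSet_Ioc fun σ hσ => ?_
        rw [intB_diag (mul_pos (hα.trans hσ.1) (by positivity)) hp₂ hd0 i]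
      rw [hV3]
      simp only [show (d:ℝ)/2 - ((d:ℝ) + 2*s)/2 = -s from by ring,
        show ((d:ℝ) + 2*s)/2 - (d:ℝ)/2 = s from by ring,
        show ((d:ℝ) + 2*s + 2)/2 - (d:ℝ)/2 - 1 = s from by ring,
        show (d:ℝ)/2 + 1 - ((d:ℝ) + 2*s + 2)/2 = -s from by ring,
        show ((d:ℝ) + 2*s)/2 = (d:ℝ)/2 + s from by ring,
        show ((d:ℝ) + 2*s + 2)/2 = ((d:ℝ)/2 + s) + 1 from by ring,
        show (d:ℝ)/2 + s - (d:ℝ)/2 = s from by ring,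
        show (d:ℝ)/2 - ((d:ℝ)/2 + s) = -s from by ring,
        show (d:ℝ)/2 + s + 1 - (d:ℝ)/2 - 1 = s from by ring,
        show (d:ℝ)/2 + 1 - ((d:ℝ)/2 + s + 1) = -s from by ring]
      rw [Real.Gamma_add_one (show (d:ℝ)/2 + s ≠ 0 by positivity)]
      set M := ∫ σ in Ioc α β, σ ^ (s - 1) * (σ * t ^ 2) ^ (-s) with hM
      have hpull : ∀ C : ℝ, (∫ σ in Ioc α β, σ ^ (s-1) * (C * (σ * t ^ 2) ^ (-s))) = C * M := by
        intro C
        rw [hM, ← integral_const_mul]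
        exact setIntegral_congr_fun measurableSet_Ioc fun σ hσ =>
          mul_left_comm _ C _
      rw [hpull, hpull]
      have hprod : (μ * t ^ 2) ^ (-s) = (μ ^ s)⁻¹ * (t ^ (2*s))⁻¹ := by
        rw [Real.mul_rpow hμ.le (sq_nonneg t), Real.rpow_neg hμ.le,
          ← Real.rpow_natCast t 2, ← Real.rpow_mul ht.le,
          show ((2:ℕ):ℝ) * -s = -(2*s) by push_cast; ring, Real.rpow_neg ht.le]
      rw [hprod]
      have hπ : π ^ ((d:ℝ)/2) ≠ 0 := (Real.rpow_pos_of_pos Real.pi_pos _).ne'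
      have hGs0 : Real.Gamma s ≠ 0 := (Real.Gamma_pos_of_pos hs0).ne'
      have hGds0 : Real.Gamma ((d:ℝ)/2 + s) ≠ 0 :=
        (Real.Gamma_pos_of_pos (by positivity)).ne'
      have hds0 : (d:ℝ)/2 + s ≠ 0 := by positivity
      have hμs : μ ^ s ≠ 0 := (Real.rpow_pos_of_pos hμ _).ne'
      have hts : t ^ (2*s) ≠ 0 := (Real.rpow_pos_of_pos ht _).ne'
      field_simp
      ring
  · have hEntry : (fun x : EuclideanSpace ℝ (Fin d) => lamePoissonEntry d s μ lam x t i j)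
        = fun x => (((d:ℝ) + 2*s) *
              (Real.Gamma ((d:ℝ)/2 + s) / (2 * π ^ ((d:ℝ)/2) * Real.Gamma s)) * t ^ (2*s) * ε) *
            (x i * x j *
              ∫ σ in Ioc α β, σ ^ (s - 1) * (‖x‖ ^ 2 + σ * t ^ 2) ^ (-(((d:ℝ) + 2*s + 2)/2))) := by
      funext x
      rw [lamePoissonEntry, if_neg hij, hJ (((d:ℝ) + 2*s + 2)/2) x]
      ring
    constructor
    · rw [hEntry]
      exact ((fub2 (s := s) (β := β) hα ht hp₂ i j).1).const_mul _
    · rw [hEntry, if_neg hij, integral_const_mul, (fub2 (s := s) (β := β) hα ht hp₂ i j).2]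
      have hz : (∫ σ in Ioc α β, σ ^ (s-1) *
            ∫ x : EuclideanSpace ℝ (Fin d), x i * x j *
              (‖x‖ ^ 2 + σ * t ^ 2) ^ (-(((d:ℝ) + 2*s + 2)/2)))
          = ∫ σ in Ioc α β, (0:ℝ) := by
        refine setIntegral_congr_fun measurableSet_Ioc fun σ hσ => ?_
        rw [offdiag_zero hij, mul_zero]
      rw [hz, integral_zero, mul_zero]
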